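/- (Theorem 1) Let T be a finite tree with a designated root, g_e > 0 strictly positive conductances on its edges, K = K_{1/g} the path-sum matrix with weights 1/g_e, and Σ_p a symmetric matrix indexed by the non-root vertices with all entries strictly positive. Set Σ_ε = K Σ_p K. Then for any two distinct non-root vertices a and b such that a is a descendant of b: Σ_ε(a,a) > Σ_ε(b,b). -/

import Mathlib

open Classical

/-- A finite tree with a designated root vertex (the slack bus). -/
structure GridTree (V : Type*) [Fintype V] [DecidableEq V] where
  graph : SimpleGraph V
  root : V
  isTree : graph.IsTree

namespace GridTree

variable {V : Type*} [Fintype V] [DecidableEq V] (T : GridTree V)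

/-- The unique path (as a walk) from a vertex to the root. -/
noncomputable def pathToRoot (a : V) : T.graph.Walk a T.root :=
  (T.isTree.existsUnique_path a T.root).choose

/-- `E_a`: the set of edges on the unique path from `a` to the root. -/
noncomputable def pathEdges (a : V) : Finset (Sym2 V) :=
  (T.pathToRoot a).edges.toFinset

/-- `c` is a descendant of `a`: `a` lies on the unique path from `c` to the root
(in particular every vertex is a descendant of itself). -/
def Descendant (c a : V) : Prop := a ∈ (T.pathToRoot c).support

/-- `b` is the parent of `a`: the edge `{a, b}` lies on the path from `a` to the root
(equivalently, `b` is the unique neighbor of `a` on that path). -/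
noncomputable def IsParent (a b : V) : Prop := s(a, b) ∈ T.pathEdges a

/-- The path-sum matrix `K_w`, indexed by the non-root vertices:
`K_w(a,b) = ∑_{e ∈ E_a ∩ E_b} w_e`. -/
noncomputable def pathMatrix (w : Sym2 V → ℝ) :
    Matrix {v : V // v ≠ T.root} {v : V // v ≠ T.root} ℝ :=
  fun a b => ∑ e ∈ T.pathEdges a.1 ∩ T.pathEdges b.1, w e

/-- The reduced weighted graph Laplacian with edge weights `w`, indexed by the
non-root vertices (the row and column of the root are deleted). -/
noncomputable def lap (w : Sym2 V → ℝ) :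
    Matrix {v : V // v ≠ T.root} {v : V // v ≠ T.root} ℝ :=
  fun a b =>
    if a = b then ∑ c ∈ Finset.univ.filter (fun c => T.graph.Adj a.1 c), w s(a.1, c)
    else if T.graph.Adj a.1 b.1 then - w s(a.1, b.1) else 0

end GridTree


namespace GridTree

variable {V : Type*} [Fintype V] [DecidableEq V] (T : GridTree V)

lemma pathToRoot_isPath (a : V) : (T.pathToRoot a).IsPath :=
  (T.isTree.existsUnique_path a T.root).choose_spec.1

lemma pathToRoot_unique {a : V} (p : T.graph.Walk a T.root) (hp : p.IsPath) :
    p = T.pathToRoot a :=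
  (T.isTree.existsUnique_path a T.root).choose_spec.2 p hp

lemma dropUntil_eq {a b : V} (h : T.Descendant a b) :
    (T.pathToRoot a).dropUntil b h = T.pathToRoot b :=
  T.pathToRoot_unique _ ((T.pathToRoot_isPath a).dropUntil h)

lemma pathEdges_subset_of_descendant {a b : V} (h : T.Descendant a b) :
    T.pathEdges b ⊆ T.pathEdges a := by
  intro e he
  simp only [pathEdges, List.mem_toFinset] at he ⊢
  rw [← T.dropUntil_eq h] at he
  exact (T.pathToRoot a).edges_dropUntil_subset h he

lemma descendant_antisymm {a b : V} (hab : T.Descendant a b) (hba : T.Descendant b a) :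
    a = b := by
  by_contra hne
  have hnodup := (T.pathToRoot_isPath b).support_nodup
  rw [← (T.pathToRoot b).take_spec hba, SimpleGraph.Walk.support_append] at hnodup
  have h1 : b ∈ ((T.pathToRoot b).takeUntil a hba).support :=
    SimpleGraph.Walk.start_mem_support _
  have h2 : b ∈ ((T.pathToRoot b).dropUntil a hba).support.tail := by
    have hb : b ∈ ((T.pathToRoot b).dropUntil a hba).support := by
      rw [T.dropUntil_eq hba]; exact hab
    rw [SimpleGraph.Walk.support_eq_cons, List.mem_cons] at hb
    rcases hb with hb | hb
    · exact absurd hb.symm hne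
    · exact hb
  exact (List.nodup_append.1 hnodup).2.2 b h1 b h2 rfl

lemma pathEdges_subset_edgeSet {a : V} {e : Sym2 V} (he : e ∈ T.pathEdges a) :
    e ∈ T.graph.edgeSet := by
  simp only [pathEdges, List.mem_toFinset] at he
  exact (T.pathToRoot a).edges_subset_edgeSet he

end GridTree

/-- **Theorem 1.** In the DC-resistive model `Σ_ε = K Σ_p K` with
`K = K_{1/g}` and `Σ_p` symmetric entrywise positive, if the non-root vertex `a` is a
descendant of the non-root vertex `b` with `a ≠ b`, then `Σ_ε(a,a) > Σ_ε(b,b)`. -/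
theorem sigma_eps_diag_increases_down_tree
    {V : Type*} [Fintype V] [DecidableEq V] (T : GridTree V)
    (g : Sym2 V → ℝ) (hg : ∀ e ∈ T.graph.edgeSet, 0 < g e)
    (Sp : Matrix {v : V // v ≠ T.root} {v : V // v ≠ T.root} ℝ)
    (hsym : Sp.IsSymm) (hpos : ∀ i j, 0 < Sp i j)
    (a b : {v : V // v ≠ T.root}) (hne : a ≠ b) (hdesc : T.Descendant a.1 b.1) :
    (T.pathMatrix (fun e => (g e)⁻¹) * Sp * T.pathMatrix (fun e => (g e)⁻¹)) a a >
      (T.pathMatrix (fun e => (g e)⁻¹) * Sp * T.pathMatrix (fun e => (g e)⁻¹)) b b := by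
  set K := T.pathMatrix (fun e => (g e)⁻¹) with hK
  -- positivity of weights on path edges
  have hw : ∀ (v : V) (e : Sym2 V), e ∈ T.pathEdges v → 0 < (g e)⁻¹ := fun v e he =>
    inv_pos.2 (hg e (T.pathEdges_subset_edgeSet he))
  have Ksymm : ∀ i j, K i j = K j i := by
    intro i j
    simp only [hK, GridTree.pathMatrix, Finset.inter_comm]
  have Knonneg : ∀ i j, 0 ≤ K i j := by
    intro i j
    exact Finset.sum_nonneg fun e he => le_of_lt (hw i.1 e (Finset.mem_inter.1 he).1)
  have hsubab : T.pathEdges b.1 ⊆ T.pathEdges a.1 := T.pathEdges_subset_of_descendant hdesc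
  have hmono : ∀ i, K b i ≤ K a i := by
    intro i
    refine Finset.sum_le_sum_of_subset_of_nonneg
      (Finset.inter_subset_inter hsubab (le_refl _)) fun e he _ => ?_
    exact le_of_lt (hw a.1 e (Finset.mem_inter.1 he).1)
  -- first edge of the path from a, not on the path from b
  have hnotnil : ¬ (T.pathToRoot a.1).Nil := SimpleGraph.Walk.not_nil_of_ne a.2
  obtain ⟨c, hadj, q, hq⟩ := SimpleGraph.Walk.not_nil_iff.1 hnotnil
  have he0a : s(a.1, c) ∈ T.pathEdges a.1 := by
    simp only [GridTree.pathEdges, List.mem_toFinset, hq, SimpleGraph.Walk.edges_cons]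
    exact List.mem_cons_self
  have he0b : s(a.1, c) ∉ T.pathEdges b.1 := by
    intro hmem
    simp only [GridTree.pathEdges, List.mem_toFinset] at hmem
    have : T.Descendant b.1 a.1 :=
      (T.pathToRoot b.1).fst_mem_support_of_mem_edges hmem
    exact hne (Subtype.ext (T.descendant_antisymm hdesc this))
  have hstrict : K b a < K a a := by
    simp only [hK, GridTree.pathMatrix, Finset.inter_self,
      Finset.inter_eq_left.2 hsubab]
    refine Finset.sum_lt_sum_of_subset hsubab he0a he0b (hw a.1 _ he0a)
      fun e he _ => le_of_lt (hw a.1 e he)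
  have expand : ∀ x : {v : V // v ≠ T.root},
      (K * Sp * K) x x = ∑ j, ∑ i, K x i * Sp i j * K x j := by
    intro x
    simp only [Matrix.mul_apply, Finset.sum_mul]
    exact Finset.sum_congr rfl fun j _ => Finset.sum_congr rfl fun i _ => by
      rw [Ksymm j x]
  rw [gt_iff_lt, expand a, expand b]
  have hterm : ∀ i j, K b i * Sp i j * K b j ≤ K a i * Sp i j * K a j := by
    intro i j
    have h1 := hmono i
    have h2 := hmono j
    have h3 := Knonneg b i
    have h4 := Knonneg b j
    have h5 := hpos i j
    have h6 : Sp i j * (K b i * K b j) ≤ Sp i j * (K a i * K a j) :=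
      mul_le_mul_of_nonneg_left (mul_le_mul h1 h2 h4 (h3.trans h1)) h5.le
    nlinarith [h6]
  refine Finset.sum_lt_sum (fun j _ => Finset.sum_le_sum fun i _ => hterm i j)
    ⟨a, Finset.mem_univ a, ?_⟩
  refine Finset.sum_lt_sum (fun i _ => hterm i a) ⟨a, Finset.mem_univ a, ?_⟩
  have h3 := Knonneg b a
  have h5 := hpos a a
  have h6 : Sp a a * (K b a * K b a) < Sp a a * (K a a * K a a) :=
    mul_lt_mul_of_pos_left (mul_self_lt_mul_self h3 hstrict) h5
  nlinarith [h6]
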